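/- Let G be a group and R, S, T subgroups of G × G each containing the diagonal, and suppose R ⊓ S ≤ T (every pair lying in both R and S lies in T). Then the shifting property holds: for all x, y, u, v ∈ G, if (x, y) ∈ R, (x, y) ∈ T, (x, u) ∈ S, (y, v) ∈ S and (u, v) ∈ R, then (u, v) ∈ T. -/
import Mathlib

/-- The Shifting Lemma in the category of groups for reflexive internal relations. -/
theorem shifting_lemma_subgroups {G : Type*} [Group G]
    (R S T : Subgroup (G × G))
    (hR : ∀ g : G, (g, g) ∈ R) (hS : ∀ g : G, (g, g) ∈ S) (hT : ∀ g : G, (g, g) ∈ T)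
    (hRS : R ⊓ S ≤ T) :
    ∀ x y u v : G, (x, y) ∈ R → (x, y) ∈ T → (x, u) ∈ S → (y, v) ∈ S →
      (u, v) ∈ R → (u, v) ∈ T := by
  intro x y u v hRxy hTxy hSxu hSyv hRuv
  have hqR : ((u * x⁻¹ * y, v) : G × G) ∈ R := by
    have h := R.mul_mem (R.mul_mem hRuv (R.inv_mem hRxy)) (hR y)
    simpa [Prod.ext_iff, mul_assoc] using h
  have hqS : ((u * x⁻¹ * y, v) : G × G) ∈ S := by
    have h := S.mul_mem (S.mul_mem (hS u) (S.inv_mem hSxu)) hSyv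
    simpa [Prod.ext_iff, mul_assoc] using h
  have hqT : ((u * x⁻¹ * y, v) : G × G) ∈ T := hRS ⟨hqR, hqS⟩
  have h := T.mul_mem (T.mul_mem hqT (T.inv_mem (hT y))) hTxy
  simpa [Prod.ext_iff, mul_assoc] using h
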